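/- arXiv:1808.02263 — 4 statements merged into one kernel-verified Lean document; each statement's English description precedes it below -/
import Mathlib

section
/- For integers a and positive integers b with gcd(a,b)=1, the normalized Dedekind sum S(a,b) = 12·s(a,b) is an integer if and only if b divides a²+1, and in that case S(a,b) = 0. -/
/-- The sawtooth function ((x)). -/
def saw (x : ℚ) : ℚ := if x.den = 1 then 0 else x - ⌊x⌋ - 1/2

/-- The classical Dedekind sum s(a,b). -/
def dedS (a : ℤ) (b : ℕ) : ℚ :=
  ∑ k ∈ Finset.Icc 1 b, saw ((k : ℚ) / b) * saw ((a : ℚ) * k / b)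

/-- The normalized Dedekind sum S(a,b) = 12 s(a,b). -/
def S (a : ℤ) (b : ℕ) : ℚ := 12 * dedS a b

namespace DedAux


lemma emod_inv_emod (b : ℕ) (x y v : ℤ) (hxy : x * y = 1 + b * v) (k : ℤ) :
    (x * ((y * k) % b)) % b = k % b := by
  conv_lhs => rw [Int.mul_emod, Int.emod_emod_of_dvd _ dvd_rfl, ← Int.mul_emod]
  rw [show x * (y * k) = k + (v * k) * b by linear_combination k * hxy]
  exact Int.add_mul_emod_self_right _ _ _

lemma emod_bound (b : ℕ) (hb : 0 < b) (x : ℤ) (hcop : IsCoprime (b:ℤ) x) (k : ℕ)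
    (hk : k ∈ Finset.Ico 1 b) : 0 < (x * k) % b ∧ (x * k) % b < b := by
  rw [Finset.mem_Ico] at hk
  have hbz : ((b:ℤ)) ≠ 0 := by exact_mod_cast hb.ne'
  have h0 : 0 ≤ (x * k) % b := Int.emod_nonneg _ hbz
  have h1 : (x * k) % b < b := Int.emod_lt_of_pos _ (by exact_mod_cast hb)
  have hne : (x * k) % b ≠ 0 := by
    intro h
    have hd : (b:ℤ) ∣ x * k := Int.dvd_of_emod_eq_zero h
    have h2 : (b:ℤ) ∣ (k:ℤ) := hcop.dvd_of_dvd_mul_left hd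
    have h3 := Int.le_of_dvd (by exact_mod_cast hk.1) h2
    omega
  exact ⟨lt_of_le_of_ne h0 (Ne.symm hne), h1⟩

lemma emod_mem (b : ℕ) (hb : 0 < b) (x : ℤ) (hcop : IsCoprime (b:ℤ) x) (k : ℕ)
    (hk : k ∈ Finset.Ico 1 b) : ((x * k) % b).toNat ∈ Finset.Ico 1 b := by
  have := emod_bound b hb x hcop k hk
  rw [Finset.mem_Ico]
  omega

lemma inv_toNat (b : ℕ) (x y v : ℤ) (hxy : x * y = 1 + b * v)
    (k : ℕ) (hk : k ∈ Finset.Ico 1 b) :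
    ((x * (((y * k) % b).toNat : ℤ)) % b).toNat = k := by
  rw [Finset.mem_Ico] at hk
  have hbz : ((b:ℤ)) ≠ 0 := by exact_mod_cast (by omega : b ≠ 0)
  rw [Int.toNat_of_nonneg (Int.emod_nonneg _ hbz), emod_inv_emod b x y v hxy,
    Int.emod_eq_of_lt (by exact_mod_cast Nat.zero_le k) (by exact_mod_cast hk.2),
    Int.toNat_natCast]

lemma sum_perm {M : Type*} [AddCommMonoid M] (a : ℤ) (b : ℕ) (hb : 0 < b)
    (u v : ℤ) (hu : u * a = 1 + b * v) (g : ℤ → M) :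
    ∑ k ∈ Finset.Ico 1 b, g ((a * k) % b) = ∑ k ∈ Finset.Ico 1 b, g (k) := by
  have hbz : ((b:ℤ)) ≠ 0 := by exact_mod_cast hb.ne'
  have hcopa : IsCoprime ((b:ℤ)) a := ⟨-v, u, by linear_combination hu⟩
  have hcopu : IsCoprime ((b:ℤ)) u := ⟨-v, a, by linear_combination hu⟩
  refine Finset.sum_nbij' (fun k => ((a * k) % b).toNat) (fun k => ((u * k) % b).toNat)
    (fun k hk => emod_mem b hb a hcopa k hk) (fun k hk => emod_mem b hb u hcopu k hk)
    (fun k hk => inv_toNat b u a v hu k hk)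
    (fun k hk => inv_toNat b a u v (by linear_combination hu) k hk)
    (fun k hk => ?_)
  rw [Int.toNat_of_nonneg (Int.emod_nonneg _ hbz)]

lemma sum_Ico_id (b : ℕ) : (2 : ℤ) * ∑ k ∈ Finset.Ico 1 b, (k:ℤ) = b * (b - 1) := by
  induction b with
  | zero => simp
  | succ n ih =>
    rcases Nat.eq_zero_or_pos n with rfl | hn
    · simp
    · rw [Finset.sum_Ico_succ_top hn, mul_add]
      push_cast
      push_cast at ih
      linear_combination ih

lemma sum_Ico_sq (b : ℕ) : (6 : ℤ) * ∑ k ∈ Finset.Ico 1 b, (k:ℤ)^2 = b * (b - 1) * (2*b - 1) := by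
  induction b with
  | zero => simp
  | succ n ih =>
    rcases Nat.eq_zero_or_pos n with rfl | hn
    · simp
    · rw [Finset.sum_Ico_succ_top hn, mul_add]
      push_cast
      push_cast at ih
      linear_combination ih

lemma saw_div (m : ℤ) (b : ℕ) (hb : 0 < b) (h : ¬ ((b:ℤ) ∣ m)) :
    saw ((m:ℚ)/b) = ((m % b : ℤ) : ℚ)/b - 1/2 := by
  have hbQ : (b:ℚ) ≠ 0 := by exact_mod_cast hb.ne'
  have hden : ((m:ℚ)/b).den ≠ 1 := by
    intro hd
    apply h
    have h1 := Rat.coe_int_num_of_den_eq_one hd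
    have h2 : ((((m:ℚ)/b).num : ℚ)) * b = m := by
      rw [h1]; field_simp
    have h3 : (((m:ℚ)/b).num) * b = m := by exact_mod_cast h2
    exact ⟨((m:ℚ)/b).num, by linarith⟩
  rw [saw, if_neg hden, Rat.floor_intCast_div_natCast, Int.emod_def]
  push_cast
  field_simp






lemma S_formula (a : ℤ) (b : ℕ) (hb : 0 < b) (u v : ℤ) (hu : u * a = 1 + b * v)
    (hcopa : IsCoprime ((b:ℤ)) a) :
    S a b = 12 * ((∑ k ∈ Finset.Ico 1 b, (k:ℤ) * ((a*k) % b) : ℤ) : ℚ) / (b:ℚ)^2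
      - 3*((b:ℚ)-1) := by
  have hbQ : (b:ℚ) ≠ 0 := by exact_mod_cast hb.ne'
  rw [S, dedS, ← Finset.Ico_add_one_right_eq_Icc, Finset.sum_Ico_succ_top hb]
  have hlast : saw ((b:ℚ)/b) * saw ((a:ℚ)*b/b) = 0 := by
    rw [div_self hbQ, show saw 1 = 0 by rw [saw]; norm_num, zero_mul]
  rw [hlast, add_zero]
  have hterm : ∀ k ∈ Finset.Ico 1 b, saw ((k:ℚ)/b) * saw ((a:ℚ)*k/b)
      = ((k:ℚ)/b - 1/2) * ((((a*k % b : ℤ)):ℚ)/b - 1/2) := by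
    intro k hk
    have hk' := hk
    rw [Finset.mem_Ico] at hk'
    have hk1 : ¬ ((b:ℤ) ∣ (k:ℤ)) := by
      intro hd
      have := Int.le_of_dvd (by exact_mod_cast hk'.1) hd
      omega
    have hk2 : ¬ ((b:ℤ) ∣ a * k) := fun hd => hk1 (hcopa.dvd_of_dvd_mul_left hd)
    have e1 : saw ((k:ℚ)/b) = ((k:ℚ))/b - 1/2 := by
      rw [show ((k:ℚ)) = (((k:ℤ)):ℚ) by push_cast; ring, saw_div _ _ hb hk1,
        Int.emod_eq_of_lt (by exact_mod_cast Nat.zero_le k) (by exact_mod_cast hk'.2)]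
    have e2 : saw ((a:ℚ)*k/b) = (((a*k % b : ℤ)):ℚ)/b - 1/2 := by
      rw [show (a:ℚ)*(k:ℚ) = (((a*(k:ℤ)):ℤ):ℚ) by push_cast; ring]
      exact saw_div _ _ hb hk2
    rw [e1, e2]
  rw [Finset.sum_congr rfl hterm]
  have expand : ∀ k ∈ Finset.Ico 1 b, ((k:ℚ)/b - 1/2) * ((((a*k % b : ℤ)):ℚ)/b - 1/2)
      = ((k:ℚ)*(((a*k % b : ℤ)):ℚ)/(b:ℚ)^2 - (k:ℚ)/(2*b) - (((a*k % b : ℤ)):ℚ)/(2*b) + 1/4) := by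
    intro k _
    field_simp
    ring
  rw [Finset.sum_congr rfl expand]
  rw [Finset.sum_add_distrib, Finset.sum_sub_distrib, Finset.sum_sub_distrib,
    ← Finset.sum_div, ← Finset.sum_div, ← Finset.sum_div, Finset.sum_const, Nat.card_Ico]
  have hB : (2:ℚ) * ∑ k ∈ Finset.Ico 1 b, (k:ℚ) = (b:ℚ) * ((b:ℚ) - 1) := by
    have h := sum_Ico_id b
    have h2 : (((2:ℤ) * ∑ k ∈ Finset.Ico 1 b, (k:ℤ) : ℤ) : ℚ) = (((b:ℤ) * ((b:ℤ)-1) : ℤ) : ℚ) := by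
      exact_mod_cast h
    push_cast at h2
    linear_combination h2
  have hC : ∑ k ∈ Finset.Ico 1 b, (((a*k % b : ℤ)):ℚ) = ∑ k ∈ Finset.Ico 1 b, (k:ℚ) := by
    exact sum_perm a b hb u v hu (fun x => (x:ℚ))
  have hT : ((∑ k ∈ Finset.Ico 1 b, (k:ℤ) * ((a*k) % b) : ℤ) : ℚ)
      = ∑ k ∈ Finset.Ico 1 b, (k:ℚ)*(((a*k % b : ℤ)):ℚ) := by push_cast; ring
  rw [hC, hT]
  have hcard : ((b - 1 : ℕ) : ℚ) = (b:ℚ) - 1 := by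
    have : (1:ℕ) ≤ b := hb
    push_cast [this]
    ring
  rw [nsmul_eq_mul, hcard]
  have hx : ∑ k ∈ Finset.Ico 1 b, (k:ℚ) = (b:ℚ)*((b:ℚ)-1)/2 := by linarith [hB]
  rw [hx]
  field_simp
  ring








/-- The key congruence: 2aT = (a²+1)P - b²Q. -/
lemma key_cong (a : ℤ) (b : ℕ) (hb : 0 < b) (u v : ℤ) (hu : u * a = 1 + b * v) :
    2 * a * (∑ k ∈ Finset.Ico 1 b, (k:ℤ) * ((a*k) % b))
      = (a^2+1) * (∑ k ∈ Finset.Ico 1 b, (k:ℤ)^2)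
        - (b:ℤ)^2 * (∑ k ∈ Finset.Ico 1 b, ((a*k)/(b:ℤ))^2) := by
  have hTd : ∑ k ∈ Finset.Ico 1 b, (k:ℤ) * ((a*k) % b)
      = a * (∑ k ∈ Finset.Ico 1 b, (k:ℤ)^2)
        - (b:ℤ) * (∑ k ∈ Finset.Ico 1 b, (k:ℤ) * ((a*k)/(b:ℤ))) := by
    rw [Finset.mul_sum, Finset.mul_sum, ← Finset.sum_sub_distrib]
    refine Finset.sum_congr rfl fun k _ => ?_
    rw [Int.emod_def]; ring
  have hPd : (∑ k ∈ Finset.Ico 1 b, (k:ℤ)^2)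
      = a^2 * (∑ k ∈ Finset.Ico 1 b, (k:ℤ)^2)
        - 2*a*(b:ℤ) * (∑ k ∈ Finset.Ico 1 b, (k:ℤ) * ((a*k)/(b:ℤ)))
        + (b:ℤ)^2 * (∑ k ∈ Finset.Ico 1 b, ((a*k)/(b:ℤ))^2) := by
    have h1 : ∑ k ∈ Finset.Ico 1 b, ((a*(k:ℤ)) % b)^2 = ∑ k ∈ Finset.Ico 1 b, (k:ℤ)^2 :=
      sum_perm a b hb u v hu (fun x => x^2)
    calc (∑ k ∈ Finset.Ico 1 b, (k:ℤ)^2)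
        = ∑ k ∈ Finset.Ico 1 b, ((a*(k:ℤ)) % b)^2 := h1.symm
      _ = ∑ k ∈ Finset.Ico 1 b, (a^2*(k:ℤ)^2 - 2*a*(b:ℤ)*((k:ℤ)*((a*k)/(b:ℤ)))
            + (b:ℤ)^2*((a*k)/(b:ℤ))^2) := by
          refine Finset.sum_congr rfl fun k _ => ?_
          rw [Int.emod_def]; ring
      _ = _ := by
          rw [Finset.sum_add_distrib, Finset.sum_sub_distrib, ← Finset.mul_sum,
            ← Finset.mul_sum, ← Finset.mul_sum]
  linear_combination 2*a*hTd - hPd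

/-- Forward: b² ∣ 12T → b ∣ a²+1. -/
lemma forward (a : ℤ) (b : ℕ) (hb : 0 < b) (u v : ℤ) (hu : u * a = 1 + b * v)
    (hdvd : ((b:ℤ))^2 ∣ 12 * (∑ k ∈ Finset.Ico 1 b, (k:ℤ) * ((a*k) % b))) :
    (b:ℤ) ∣ a^2 + 1 := by
  obtain ⟨m, hm⟩ := hdvd
  have hkey := key_cong a b hb u v hu
  have h6 := sum_Ico_sq b
  set Q := ∑ k ∈ Finset.Ico 1 b, ((a*k)/(b:ℤ))^2 with hQ
  have hbz : ((b:ℤ)) ≠ 0 := by exact_mod_cast hb.ne'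
  have hXY : (b:ℤ) * ((a^2+1)*((b:ℤ)-1)*(2*(b:ℤ)-1)) = (b:ℤ) * ((b:ℤ)*(a*m + 6*Q)) := by
    linear_combination (-(a^2+1))*h6 - 6*hkey + a*hm
  have hcancel := mul_left_cancel₀ hbz hXY
  exact ⟨a*m + 6*Q - (a^2+1)*(2*(b:ℤ)-3), by linear_combination hcancel⟩

/-- Backward: b ∣ a²+1 → 4T = b²(b-1). -/
lemma backward (a : ℤ) (b : ℕ) (hb : 0 < b) (u v : ℤ) (hu : u * a = 1 + b * v)
    (hcopa : IsCoprime ((b:ℤ)) a) (w : ℤ) (hw : a^2 + 1 = b * w) :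
    4 * (∑ k ∈ Finset.Ico 1 b, (k:ℤ) * ((a*k) % b)) = (b:ℤ)^2 * ((b:ℤ)-1) := by
  have hbz : ((b:ℤ)) ≠ 0 := by exact_mod_cast hb.ne'
  have hinv : (-a) * a = 1 + (b:ℤ) * (-w) := by linear_combination -hw
  have hperm := sum_perm a b hb u v hu (fun x => x * (((-a) * x) % b))
  have hL : ∀ k ∈ Finset.Ico 1 b,
      ((a*(k:ℤ)) % b) * (((-a) * ((a*(k:ℤ)) % b)) % b) = ((a*(k:ℤ)) % b) * k := by
    intro k hk
    rw [Finset.mem_Ico] at hk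
    rw [emod_inv_emod b (-a) a (-w) hinv]
    congr 1
    exact Int.emod_eq_of_lt (Int.natCast_nonneg k) (by exact_mod_cast hk.2)
  rw [Finset.sum_congr rfl hL] at hperm
  have hneg : ∀ k ∈ Finset.Ico 1 b,
      (k:ℤ) * (((-a) * (k:ℤ)) % b) = (k:ℤ) * ((b:ℤ) - (a*(k:ℤ)) % b) := by
    intro k hk
    have hbd := emod_bound b hb a hcopa k hk
    congr 1
    have hd : ((b:ℤ)) ∣ ((-a) * (k:ℤ)) - ((b:ℤ) - (a*(k:ℤ)) % b) :=
      ⟨-1 - (a*(k:ℤ))/(b:ℤ), by rw [Int.emod_def]; ring⟩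
    have hmm : ((-a) * (k:ℤ)) % b = (((b:ℤ) - (a*(k:ℤ)) % b)) % b :=
      Int.emod_eq_emod_iff_emod_sub_eq_zero.mpr (Int.emod_eq_zero_of_dvd hd)
    rw [hmm, Int.emod_eq_of_lt (by omega) (by omega)]
  rw [Finset.sum_congr rfl hneg] at hperm
  -- hperm : ∑ (a k % b) * k = ∑ k * (b - a k % b)
  have hexp : ∑ k ∈ Finset.Ico 1 b, (k:ℤ) * ((b:ℤ) - (a*(k:ℤ)) % b)
      = (b:ℤ) * (∑ k ∈ Finset.Ico 1 b, (k:ℤ))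
        - ∑ k ∈ Finset.Ico 1 b, (k:ℤ) * ((a*(k:ℤ)) % b) := by
    rw [Finset.mul_sum, ← Finset.sum_sub_distrib]
    exact Finset.sum_congr rfl fun k _ => by ring
  rw [hexp] at hperm
  have hcomm : ∑ k ∈ Finset.Ico 1 b, ((a*(k:ℤ)) % b) * (k:ℤ)
      = ∑ k ∈ Finset.Ico 1 b, (k:ℤ) * ((a*(k:ℤ)) % b) :=
    Finset.sum_congr rfl fun k _ => mul_comm _ _
  rw [hcomm] at hperm
  have hB := sum_Ico_id b
  linear_combination 2*hperm + (b:ℤ)*hB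


end DedAux

theorem stmt_0 (a : ℤ) (b : ℕ) (hb : 0 < b) (hab : Int.gcd a b = 1) :
    ((∃ m : ℤ, S a b = (m : ℚ)) ↔ (b : ℤ) ∣ a ^ 2 + 1) ∧
    ((b : ℤ) ∣ a ^ 2 + 1 → S a b = 0) := by
  obtain ⟨u, v, huv⟩ := Int.isCoprime_iff_gcd_eq_one.mpr hab
  have hu : u * a = 1 + (b:ℤ) * (-v) := by linear_combination huv
  have hcopa : IsCoprime ((b:ℤ)) a := ⟨v, u, by linear_combination huv⟩
  have hbQ : (b:ℚ) ≠ 0 := by exact_mod_cast hb.ne'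
  have hS := DedAux.S_formula a b hb u (-v) hu hcopa
  have hzero : (b:ℤ) ∣ a^2 + 1 → S a b = 0 := by
    intro hd
    obtain ⟨w, hw⟩ := hd
    have h4 := DedAux.backward a b hb u (-v) hu hcopa w hw
    have h4Q : (4:ℚ) * ((∑ k ∈ Finset.Ico 1 b, (k:ℤ) * ((a*k) % b) : ℤ) : ℚ)
        = (b:ℚ)^2 * ((b:ℚ) - 1) := by exact_mod_cast h4
    rw [hS]
    field_simp
    push_cast at h4Q ⊢
    linear_combination 3*h4Q
  refine ⟨⟨?_, fun hd => ⟨0, by rw [hzero hd]; norm_num⟩⟩, hzero⟩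
  rintro ⟨m, hm⟩
  rw [hS] at hm
  have h1 : (((12 * ∑ k ∈ Finset.Ico 1 b, (k:ℤ) * ((a*k) % b)) : ℤ) : ℚ)
      = (((m + 3*((b:ℤ)-1)) * (b:ℤ)^2 : ℤ) : ℚ) := by
    field_simp at hm
    push_cast at hm ⊢
    linear_combination hm
  have h2 : 12 * (∑ k ∈ Finset.Ico 1 b, (k:ℤ) * ((a*k) % b))
      = (m + 3*((b:ℤ)-1)) * (b:ℤ)^2 := by exact_mod_cast h1
  exact DedAux.forward a b hb u (-v) hu ⟨m + 3*((b:ℤ)-1), by linear_combination h2⟩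
end

section
/- For integers a, b with gcd(a,b)=1 and a,b ≥ 1, the normalized Dedekind sums satisfy the reciprocity law S(a,b) + S(b,a) = a/b + b/a + 1/(ab) - 3. -/
open Finset


lemma gauss1 (n : ℕ) : ∑ x ∈ Icc 1 n, 2 * x = n * (n + 1) := by
  induction n with
  | zero => simp
  | succ m ih => rw [Finset.sum_Icc_succ_top (by omega), ih]; ring

lemma gauss2 (n : ℕ) : ∑ x ∈ Icc 1 n, 6 * x ^ 2 = n * (n + 1) * (2 * n + 1) := by
  induction n with
  | zero => simp
  | succ m ih => rw [Finset.sum_Icc_succ_top (by omega), ih]; ring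

lemma notdvd {a b x : ℕ} (hab : Nat.gcd a b = 1) (hx1 : 1 ≤ x) (hx2 : x ≤ b - 1) :
    ¬ b ∣ a * x := by
  intro h
  have hbx : b ∣ x := (Nat.Coprime.dvd_of_dvd_mul_left (Nat.coprime_comm.mp hab) h)
  have := Nat.le_of_dvd (by omega) hbx
  omega

lemma qr_facts {a b x : ℕ} (ha : 1 ≤ a) (hab : Nat.gcd a b = 1) (hx1 : 1 ≤ x) (hx2 : x ≤ b - 1) :
    a * x = b * (a * x / b) + a * x % b ∧ 0 < a * x % b ∧ a * x % b < b ∧ a * x / b ≤ a - 1 := by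
  have hb : 1 < b := by omega
  have h1 := Nat.div_add_mod (a * x) b
  have h2 : a * x % b < b := Nat.mod_lt _ (by omega)
  have h3 : 0 < a * x % b := by
    rcases Nat.eq_zero_or_pos (a * x % b) with h | h
    · exact absurd (Nat.dvd_of_mod_eq_zero h) (notdvd hab hx1 hx2)
    · exact h
  have h4 : a * x / b < a := by
    rw [Nat.div_lt_iff_lt_mul (by omega)]
    have e1 : a * x ≤ a * (b - 1) := Nat.mul_le_mul_left a hx2
    have e2 : a * (b - 1) = a * b - a := by rw [Nat.mul_sub]; ring_nf
    omega
  exact ⟨h1.symm, h3, h2, by omega⟩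

lemma refl_q {a b x : ℕ} (ha : 1 ≤ a) (hab : Nat.gcd a b = 1) (hx1 : 1 ≤ x) (hx2 : x ≤ b - 1) :
    a * (b - x) / b = a - 1 - a * x / b := by
  obtain ⟨h1, h3, h2, h4⟩ := qr_facts ha hab hx1 hx2
  set q := a * x / b with hq
  set r := a * x % b with hr
  have hBX : a * (b - x) = b * (a - 1 - q) + (b - r) := by
    have e1 : a * (b - x) = a * b - a * x := Nat.mul_sub a b x
    have e2 : b * (a - 1 - q) = b * a - b * 1 - b * q := by rw [Nat.mul_sub, Nat.mul_sub]
    have e3 : b * 1 = b := Nat.mul_one b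
    have e4 : a * b = b * a := Nat.mul_comm a b
    have e5 : a * x ≤ a * b := by
      have := Nat.mul_le_mul_left a (show x ≤ b by omega); omega
    have e6 : b * q + b ≤ b * a := by
      have := Nat.mul_le_mul_left b (show q + 1 ≤ a by omega)
      rw [Nat.mul_add] at this; omega
    omega
  rw [hBX, Nat.mul_add_div (by omega), Nat.div_eq_of_lt (by omega)]
  omega

lemma refl_sum {a b : ℕ} (ha : 1 ≤ a) (hb : 1 ≤ b) (hab : Nat.gcd a b = 1) :
    ∑ x ∈ Icc 1 (b - 1), 2 * (a * x / b) = (a - 1) * (b - 1) := by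
  have key : ∑ x ∈ Icc 1 (b - 1), (a * x / b) = ∑ x ∈ Icc 1 (b - 1), (a - 1 - (a * x / b)) := by
    apply Finset.sum_nbij' (fun x => b - x) (fun x => b - x)
    · intro x hx; simp only [mem_Icc] at *; omega
    · intro x hx; simp only [mem_Icc] at *; omega
    · intro x hx; simp only [mem_Icc] at *; omega
    · intro x hx; simp only [mem_Icc] at *; omega
    · intro x hx
      simp only [mem_Icc] at hx
      have hrq := refl_q ha hab hx.1 hx.2
      have h4 := (qr_facts ha hab hx.1 hx.2).2.2.2
      simp only [hrq]
      generalize a * x / b = q at h4 ⊢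
      omega
  calc ∑ x ∈ Icc 1 (b - 1), 2 * (a * x / b)
      = ∑ x ∈ Icc 1 (b - 1), ((a * x / b) + (a * x / b)) := by
        exact Finset.sum_congr rfl (fun x hx => by ring)
    _ = ∑ x ∈ Icc 1 (b - 1), (a * x / b) + ∑ x ∈ Icc 1 (b - 1), (a * x / b) :=
        Finset.sum_add_distrib
    _ = ∑ x ∈ Icc 1 (b - 1), (a * x / b) + ∑ x ∈ Icc 1 (b - 1), (a - 1 - (a * x / b)) := by
        rw [← key]
    _ = ∑ x ∈ Icc 1 (b - 1), ((a * x / b) + (a - 1 - (a * x / b))) := Finset.sum_add_distrib.symm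
    _ = ∑ x ∈ Icc 1 (b - 1), (a - 1) := by
        refine Finset.sum_congr rfl (fun x hx => ?_)
        simp only [mem_Icc] at hx
        have h4 := (qr_facts ha hab hx.1 hx.2).2.2.2
        generalize a * x / b = q at h4 ⊢
        omega
    _ = (a - 1) * (b - 1) := by
        rw [Finset.sum_const, Nat.card_Icc, smul_eq_mul]
        have : b - 1 + 1 - 1 = b - 1 := by omega
        rw [this, Nat.mul_comm]

lemma perm_sum {a b : ℕ} (ha : 1 ≤ a) (hb : 1 ≤ b) (hab : Nat.gcd a b = 1) :
    ∑ x ∈ Icc 1 (b - 1), (a * x % b) ^ 2 = ∑ x ∈ Icc 1 (b - 1), x ^ 2 := by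
  rcases Nat.eq_or_lt_of_le hb with h1 | hb1
  · simp [← h1]
  have hmaps : ∀ x ∈ Icc 1 (b - 1), a * x % b ∈ Icc 1 (b - 1) := by
    intro x hx
    simp only [mem_Icc] at *
    obtain ⟨_, h3, h2, _⟩ := qr_facts ha hab hx.1 hx.2
    omega
  have hinj : Set.InjOn (fun x => a * x % b) (Icc 1 (b - 1)) := by
    intro x hx y hy hxy
    simp only [Finset.coe_Icc, Set.mem_Icc, mem_Icc] at *
    have hmod : a * x ≡ a * y [MOD b] := by
      unfold Nat.ModEq
      simpa using hxy
    have := (Nat.ModEq.cancel_left_of_coprime (by rwa [Nat.gcd_comm] at hab) hmod)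
    unfold Nat.ModEq at this
    rw [Nat.mod_eq_of_lt (by omega), Nat.mod_eq_of_lt (by omega)] at this
    exact this
  have himg : Finset.image (fun x => a * x % b) (Icc 1 (b - 1)) = Icc 1 (b - 1) := by
    apply Finset.eq_of_subset_of_card_le
    · intro y hy
      obtain ⟨x, hx, rfl⟩ := Finset.mem_image.mp hy
      exact hmaps x hx
    · rw [Finset.card_image_of_injOn hinj]
  conv_rhs => rw [← himg]
  rw [Finset.sum_image (fun x hx y hy h => hinj hx hy h)]

lemma lattice {a b : ℕ} (ha : 1 ≤ a) (hb : 1 ≤ b) (hab : Nat.gcd a b = 1) :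
    ∑ x ∈ Icc 1 (b - 1), ((a * x / b) ^ 2 + a * x / b)
      + 2 * ∑ y ∈ Icc 1 (a - 1), y * (b * y / a) = (b - 1) * ((a - 1) * a) := by
  have hab' : Nat.gcd b a = 1 := by rwa [Nat.gcd_comm]
  -- The double sum
  set D := ∑ x ∈ Icc 1 (b - 1), ∑ y ∈ Icc 1 (a - 1), (if b * y < a * x then 2 * y else 0)
    with hD
  -- first evaluation : row sums
  have h1 : D = ∑ x ∈ Icc 1 (b - 1), ((a * x / b) ^ 2 + a * x / b) := by
    rw [hD]
    refine Finset.sum_congr rfl (fun x hx => ?_)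
    simp only [mem_Icc] at hx
    obtain ⟨e1, e2, e3, e4⟩ := qr_facts ha hab hx.1 hx.2
    have hfil : ∀ y, y ∈ Icc 1 (a - 1) ∧ b * y < a * x ↔ y ∈ Icc 1 (a * x / b) := by
      intro y
      simp only [mem_Icc]
      constructor
      · rintro ⟨⟨hy1, hy2⟩, hlt⟩
        refine ⟨hy1, ?_⟩
        rw [Nat.le_div_iff_mul_le (by omega)]
        have hc : y * b = b * y := Nat.mul_comm y b
        omega
      · rintro ⟨hy1, hy2⟩
        have hyb : y * b ≤ a * x := by
          rw [← Nat.le_div_iff_mul_le (by omega)]; exact hy2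
        have hc : y * b = b * y := Nat.mul_comm y b
        have hne : b * y ≠ a * x := by
          intro h
          exact notdvd hab hx.1 hx.2 ⟨y, h.symm⟩
        constructor
        · constructor
          · exact hy1
          · omega
        · omega
    have hfil' : Finset.filter (fun y => b * y < a * x) (Icc 1 (a - 1)) = Icc 1 (a * x / b) := by
      ext y
      simp only [Finset.mem_filter]
      exact hfil y
    rw [← Finset.sum_filter, hfil']
    have g := gauss1 (a * x / b)
    have : ∑ y ∈ Icc 1 (a * x / b), 2 * y = (a * x / b) * (a * x / b + 1) := g
    rw [this]
    ring
  -- second evaluation: column sums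
  have h2 : D + 2 * ∑ y ∈ Icc 1 (a - 1), y * (b * y / a) = (b - 1) * ((a - 1) * a) := by
    rw [hD, Finset.sum_comm, Finset.mul_sum, ← Finset.sum_add_distrib]
    have : ∀ y ∈ Icc 1 (a - 1),
        (∑ x ∈ Icc 1 (b - 1), (if b * y < a * x then 2 * y else 0)) + 2 * (y * (b * y / a))
          = (b - 1) * (2 * y) := by
      intro y hy
      simp only [mem_Icc] at hy
      obtain ⟨e1, e2, e3, e4⟩ := qr_facts hb hab' hy.1 hy.2
      have hfil : Finset.filter (fun x => b * y < a * x) (Icc 1 (b - 1))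
          = Ioc (b * y / a) (b - 1) := by
        ext x
        simp only [Finset.mem_filter, mem_Icc, mem_Ioc]
        constructor
        · rintro ⟨⟨hx1, hx2⟩, hlt⟩
          refine ⟨?_, hx2⟩
          rw [Nat.div_lt_iff_lt_mul (by omega)]
          have hc : x * a = a * x := Nat.mul_comm x a
          omega
        · rintro ⟨hx1, hx2⟩
          have := (Nat.div_lt_iff_lt_mul (show 0 < a by omega)).mp hx1
          have hc : x * a = a * x := Nat.mul_comm x a
          have h0 : 0 ≤ b * y / a := Nat.zero_le _
          have h0' : b * y / a < x := hx1
          constructor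
          · constructor
            · omega
            · exact hx2
          · omega
      rw [← Finset.sum_filter, hfil, Finset.sum_const, Nat.card_Ioc, smul_eq_mul]
      have e5 : b * y / a ≤ b - 1 := e4
      generalize hq : b * y / a = q at *
      have : (b - 1 - q) * (2 * y) + 2 * (y * q) = (b - 1) * (2 * y) := by
        rw [Nat.sub_mul]
        have h5 : q * (2 * y) ≤ (b-1) * (2 * y) := Nat.mul_le_mul_right _ e5
        have hc2 : q * (2 * y) = 2 * (y * q) := by ring
        omega
      omega
    rw [Finset.sum_congr rfl this, ← Finset.mul_sum, gauss1 (a-1)]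
    have : a - 1 + 1 = a := by omega
    rw [this]
  omega


lemma floor_nat_div (m n : ℕ) : ⌊(m : ℚ) / (n : ℚ)⌋ = ((m / n : ℕ) : ℤ) := by
  rw [← Nat.floor_div_eq_div (K := ℚ) m n]
  rw [← Int.natCast_floor_eq_floor (by positivity)]

lemma den_ne_one {m n : ℕ} (hn : 0 < n) (hnd : ¬ n ∣ m) : ((m : ℚ) / (n : ℚ)).den ≠ 1 := by
  intro h
  have h2 := (Rat.den_eq_one_iff _).mp h
  set q := (m : ℚ) / (n : ℚ) with hq
  have hn0 : (n : ℚ) ≠ 0 := by positivity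
  have : (m : ℚ) = q.num * n := by
    rw [h2, hq]; field_simp
  have hm : (m : ℤ) = q.num * n := by exact_mod_cast this
  have : (n : ℤ) ∣ (m : ℤ) := ⟨q.num, by linarith⟩
  exact hnd (Int.natCast_dvd_natCast.mp this)

lemma saw_eval {m n : ℕ} (hn : 0 < n) (hnd : ¬ n ∣ m) :
    saw ((m : ℚ) / (n : ℚ)) = (m : ℚ) / n - ((m / n : ℕ) : ℚ) - 1/2 := by
  rw [saw, if_neg (den_ne_one hn hnd), floor_nat_div]
  simp only [Int.cast_natCast]
lemma sum_id_val (b : ℕ) (hb : 1 ≤ b) :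
    ∑ x ∈ Icc 1 (b - 1), (x : ℚ) = ((b:ℚ) - 1) * (b:ℚ) / 2 := by
  have h := gauss1 (b - 1)
  have hcast : ((∑ x ∈ Icc 1 (b-1), 2 * x : ℕ) : ℚ) = (((b-1) * (b - 1 + 1) : ℕ) : ℚ) := by
    exact congrArg (Nat.cast : ℕ → ℚ) h
  push_cast at hcast
  rw [← Finset.mul_sum] at hcast
  have hb1 : ((b - 1 : ℕ) : ℚ) = (b : ℚ) - 1 := by
    push_cast [Nat.cast_sub hb]; ring
  rw [hb1] at hcast
  linarith

lemma sum_sq_val (b : ℕ) (hb : 1 ≤ b) :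
    ∑ x ∈ Icc 1 (b - 1), (x : ℚ)^2 = ((b:ℚ) - 1) * (b:ℚ) * (2*(b:ℚ) - 1) / 6 := by
  have h := gauss2 (b - 1)
  have hcast : ((∑ x ∈ Icc 1 (b-1), 6 * x^2 : ℕ) : ℚ)
      = (((b-1) * (b - 1 + 1) * (2 * (b-1) + 1) : ℕ) : ℚ) := by
    exact congrArg (Nat.cast : ℕ → ℚ) h
  push_cast at hcast
  rw [← Finset.mul_sum] at hcast
  have hb1 : ((b - 1 : ℕ) : ℚ) = (b : ℚ) - 1 := by
    push_cast [Nat.cast_sub hb]; ring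
  rw [hb1] at hcast
  linarith

lemma sum_q_val {a b : ℕ} (ha : 1 ≤ a) (hb : 1 ≤ b) (hab : Nat.gcd a b = 1) :
    ∑ x ∈ Icc 1 (b - 1), ((a * x / b : ℕ) : ℚ) = ((a:ℚ) - 1) * ((b:ℚ) - 1) / 2 := by
  have h := refl_sum ha hb hab
  have hcast : ((∑ x ∈ Icc 1 (b-1), 2 * (a * x / b) : ℕ) : ℚ)
      = (((a-1) * (b-1) : ℕ) : ℚ) := by exact congrArg (Nat.cast : ℕ → ℚ) h
  push_cast at hcast
  rw [← Finset.mul_sum] at hcast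
  have ha1 : ((a - 1 : ℕ) : ℚ) = (a : ℚ) - 1 := by push_cast [Nat.cast_sub ha]; ring
  have hb1 : ((b - 1 : ℕ) : ℚ) = (b : ℚ) - 1 := by push_cast [Nat.cast_sub hb]; ring
  rw [ha1, hb1] at hcast
  linarith

lemma saw_one : saw 1 = 0 := by simp [saw]

lemma dedS_formula (a b : ℕ) (ha : 1 ≤ a) (hb : 1 ≤ b) (hab : Nat.gcd a b = 1) :
    dedS (a : ℤ) b = (a:ℚ) * ((b:ℚ) - 1) * (2*(b:ℚ) - 1) / (6*(b:ℚ))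
      - (∑ x ∈ Icc 1 (b-1), (x:ℚ) * ((a * x / b : ℕ) : ℚ)) / (b:ℚ) - ((b:ℚ) - 1)/4 := by
  obtain ⟨m, rfl⟩ : ∃ m, b = m + 1 := ⟨b - 1, by omega⟩
  have hb0 : ((m+1 : ℕ) : ℚ) ≠ 0 := by positivity
  rw [dedS]
  simp only [Nat.add_sub_cancel]
  rw [Finset.sum_Icc_succ_top (by omega)]
  have h1 : (((m+1 : ℕ)) : ℚ) / ((m+1 : ℕ) : ℚ) = 1 := div_self hb0
  rw [h1, saw_one, zero_mul, add_zero]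
  -- pointwise evaluation
  have hpt : ∀ k ∈ Icc 1 m, saw ((k : ℚ) / ((m+1:ℕ):ℚ)) * saw (((a:ℤ) : ℚ) * k / ((m+1:ℕ):ℚ))
      = ((a:ℚ)/((m+1:ℕ):ℚ)^2) * (k:ℚ)^2
        - (1/((m+1:ℕ):ℚ)) * ((k:ℚ) * ((a * k / (m+1) : ℕ) : ℚ))
        - (((a:ℚ)+1)/(2*((m+1:ℕ):ℚ))) * (k:ℚ) + (1/2) * ((a * k / (m+1) : ℕ) : ℚ) + 1/4 := by
    intro k hk
    simp only [mem_Icc] at hk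
    have h1 : saw ((k : ℚ) / ((m+1:ℕ):ℚ)) = (k:ℚ)/((m+1:ℕ):ℚ) - ((k / (m+1) : ℕ) : ℚ) - 1/2 :=
      saw_eval (by omega) (by intro h; have := Nat.le_of_dvd (by omega) h; omega)
    have hdiv0 : k / (m+1) = 0 := Nat.div_eq_of_lt (by omega)
    rw [hdiv0] at h1
    have h2 : saw (((a:ℤ) : ℚ) * k / ((m+1:ℕ):ℚ))
        = ((a*k:ℕ):ℚ)/((m+1:ℕ):ℚ) - ((a * k / (m+1) : ℕ) : ℚ) - 1/2 := by
      have := saw_eval (m := a*k) (n := m+1) (by omega) (notdvd hab hk.1 (by omega))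
      rw [← this]
      push_cast
      ring_nf
    rw [h1, h2]
    push_cast
    field_simp
    ring
  rw [Finset.sum_congr rfl hpt]
  simp only [Finset.sum_add_distrib, Finset.sum_sub_distrib, ← Finset.mul_sum,
    Finset.sum_const, nsmul_eq_mul, Nat.card_Icc]
  have e1 := sum_id_val (m+1) (by omega)
  have e2 := sum_sq_val (m+1) (by omega)
  have e3 := sum_q_val (a := a) (b := m+1) ha (by omega) hab
  simp only [Nat.add_sub_cancel] at e1 e2 e3
  rw [e1, e2, e3]
  have hbc : ((m + 1 - 1 : ℕ) : ℚ) = ((m+1:ℕ):ℚ) - 1 := by push_cast; ring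
  rw [hbc]
  field_simp
  ring
lemma sq_identity {a b : ℕ} (ha : 1 ≤ a) (hb : 1 ≤ b) (hab : Nat.gcd a b = 1) :
    (a:ℚ)^2 * (∑ x ∈ Icc 1 (b-1), (x:ℚ)^2)
      - 2*(a:ℚ)*(b:ℚ) * (∑ x ∈ Icc 1 (b-1), (x:ℚ) * ((a * x / b : ℕ) : ℚ))
      + (b:ℚ)^2 * (∑ x ∈ Icc 1 (b-1), ((a * x / b : ℕ) : ℚ)^2)
      = ∑ x ∈ Icc 1 (b-1), (x:ℚ)^2 := by
  have hpt : ∀ x ∈ Icc 1 (b-1),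
      (a:ℚ)^2 * (x:ℚ)^2 - 2*(a:ℚ)*(b:ℚ) * ((x:ℚ) * ((a * x / b : ℕ) : ℚ))
        + (b:ℚ)^2 * ((a * x / b : ℕ) : ℚ)^2 = ((a * x % b : ℕ) : ℚ)^2 := by
    intro x hx
    simp only [mem_Icc] at hx
    have e1 := (qr_facts ha hab hx.1 hx.2).1
    have e1q : (a:ℚ) * (x:ℚ) = (b:ℚ) * ((a * x / b : ℕ) : ℚ) + ((a * x % b : ℕ) : ℚ) := by
      exact_mod_cast congrArg (Nat.cast : ℕ → ℚ) e1
    linear_combination ((a:ℚ)*(x:ℚ) - (b:ℚ)*((a * x / b : ℕ) : ℚ) + ((a * x % b : ℕ) : ℚ)) * e1q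
  have hperm : ∑ x ∈ Icc 1 (b-1), ((a * x % b : ℕ) : ℚ)^2 = ∑ x ∈ Icc 1 (b-1), (x:ℚ)^2 := by
    have := congrArg (Nat.cast : ℕ → ℚ) (perm_sum ha hb hab)
    push_cast at this
    exact this
  calc (a:ℚ)^2 * (∑ x ∈ Icc 1 (b-1), (x:ℚ)^2)
      - 2*(a:ℚ)*(b:ℚ) * (∑ x ∈ Icc 1 (b-1), (x:ℚ) * ((a * x / b : ℕ) : ℚ))
      + (b:ℚ)^2 * (∑ x ∈ Icc 1 (b-1), ((a * x / b : ℕ) : ℚ)^2)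
      = ∑ x ∈ Icc 1 (b-1), ((a:ℚ)^2 * (x:ℚ)^2
          - 2*(a:ℚ)*(b:ℚ) * ((x:ℚ) * ((a * x / b : ℕ) : ℚ))
          + (b:ℚ)^2 * ((a * x / b : ℕ) : ℚ)^2) := by
        simp only [Finset.sum_add_distrib, Finset.sum_sub_distrib, ← Finset.mul_sum]
    _ = ∑ x ∈ Icc 1 (b-1), ((a * x % b : ℕ) : ℚ)^2 := Finset.sum_congr rfl hpt
    _ = ∑ x ∈ Icc 1 (b-1), (x:ℚ)^2 := hperm

lemma lattice_q {a b : ℕ} (ha : 1 ≤ a) (hb : 1 ≤ b) (hab : Nat.gcd a b = 1) :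
    (∑ x ∈ Icc 1 (b-1), ((a * x / b : ℕ) : ℚ)^2) + (∑ x ∈ Icc 1 (b-1), ((a * x / b : ℕ) : ℚ))
      + 2 * (∑ y ∈ Icc 1 (a-1), (y:ℚ) * ((b * y / a : ℕ) : ℚ))
      = ((b:ℚ) - 1) * (((a:ℚ) - 1) * (a:ℚ)) := by
  have := congrArg (Nat.cast : ℕ → ℚ) (lattice ha hb hab)
  push_cast [Nat.cast_sub ha, Nat.cast_sub hb] at this
  rw [Finset.sum_add_distrib] at this
  linarith

theorem stmt_4 (a b : ℕ) (ha : 1 ≤ a) (hb : 1 ≤ b) (hab : Nat.gcd a b = 1) :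
    S (a : ℤ) b + S (b : ℤ) a = (a : ℚ) / b + (b : ℚ) / a + 1 / (a * b) - 3 := by
  have hab' : Nat.gcd b a = 1 := by rwa [Nat.gcd_comm]
  have ha0 : (a : ℚ) ≠ 0 := by positivity
  have hb0 : (b : ℚ) ≠ 0 := by positivity
  have hsq := sq_identity ha hb hab
  have hlat := lattice_q ha hb hab
  have hBq := sum_q_val ha hb hab
  have hSk2 := sum_sq_val b hb
  -- solve for C (the sum of squared quotients) and then A'
  have hC : (∑ x ∈ Icc 1 (b-1), ((a * x / b : ℕ) : ℚ)^2)
      = ((1 - (a:ℚ)^2) * (((b:ℚ) - 1) * (b:ℚ) * (2*(b:ℚ) - 1) / 6)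
          + 2*(a:ℚ)*(b:ℚ) * (∑ x ∈ Icc 1 (b-1), (x:ℚ) * ((a * x / b : ℕ) : ℚ))) / (b:ℚ)^2 := by
    rw [hSk2] at hsq
    rw [eq_div_iff (by positivity)]
    linear_combination hsq
  have hA' : (∑ y ∈ Icc 1 (a-1), (y:ℚ) * ((b * y / a : ℕ) : ℚ))
      = (((b:ℚ) - 1) * (((a:ℚ) - 1) * (a:ℚ))
          - (∑ x ∈ Icc 1 (b-1), ((a * x / b : ℕ) : ℚ)^2)
          - (∑ x ∈ Icc 1 (b-1), ((a * x / b : ℕ) : ℚ))) / 2 := by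
    linarith [hlat]
  rw [hC, hBq] at hA'
  simp only [S]
  rw [dedS_formula a b ha hb hab, dedS_formula b a hb ha hab', hA']
  field_simp
  ring
end

section
/- In the setting of the main theorem, b₃ = q(a₃²+1)/t₂, viewed as a function of r₁, is a polynomial in r₁ of degree 4 with leading coefficient n·q⁵. -/
theorem stmt_14 (q r n : ℕ) (hq : 2 ≤ q) (hn : n ∣ r ^ 2 * q ^ 2 + 1)
    (s : ℤ) (hs : Int.gcd s q = 1) :
    ∃ P : Polynomial ℚ, P.degree = 4 ∧ P.leadingCoeff = (n : ℚ) * q ^ 5 ∧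
      ∀ r₁ : ℕ,
        (let t₂ : ℚ := (((r₁ : ℚ) * n + r) ^ 2 * q ^ 2 + 1) / n;
         let a₃ : ℚ := s * t₂ + ((r₁ : ℚ) * t₂ - r₁ * n - r) * q;
         q * (a₃ ^ 2 + 1) / t₂) = P.eval (r₁ : ℚ) := by
  have hnn : n ≠ 0 := by
    rintro rfl
    simp at hn
  have hqn : q ≠ 0 := by omega
  have hn0 : (n : ℚ) ≠ 0 := Nat.cast_ne_zero.mpr hnn
  have hq0 : (q : ℚ) ≠ 0 := Nat.cast_ne_zero.mpr hqn
  refine ⟨Polynomial.C ((n : ℚ) * q ^ 5) * Polynomial.X ^ 4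
    + Polynomial.C (2 * (s : ℚ) * n * q ^ 4 + 2 * r * q ^ 5) * Polynomial.X ^ 3
    + Polynomial.C ((n : ℚ) * s ^ 2 * q ^ 3 + 4 * r * s * q ^ 4
        + ((r : ℚ) ^ 2 * q ^ 2 + 1) * q ^ 3 / n - 2 * n * q ^ 3) * Polynomial.X ^ 2
    + Polynomial.C (2 * (r : ℚ) * s ^ 2 * q ^ 3 + 2 * s * q ^ 2 * ((r : ℚ) ^ 2 * q ^ 2 + 1) / n
        - 2 * s * n * q ^ 2 - 2 * r * q ^ 3) * Polynomial.X
    + Polynomial.C ((s : ℚ) ^ 2 * q * ((r : ℚ) ^ 2 * q ^ 2 + 1) / n - 2 * q ^ 2 * s * r + n * q),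
    ?_, ?_, ?_⟩
  · compute_degree!
  · have hdeg : (Polynomial.C ((n : ℚ) * q ^ 5) * Polynomial.X ^ 4
    + Polynomial.C (2 * (s : ℚ) * n * q ^ 4 + 2 * r * q ^ 5) * Polynomial.X ^ 3
    + Polynomial.C ((n : ℚ) * s ^ 2 * q ^ 3 + 4 * r * s * q ^ 4
        + ((r : ℚ) ^ 2 * q ^ 2 + 1) * q ^ 3 / n - 2 * n * q ^ 3) * Polynomial.X ^ 2
    + Polynomial.C (2 * (r : ℚ) * s ^ 2 * q ^ 3 + 2 * s * q ^ 2 * ((r : ℚ) ^ 2 * q ^ 2 + 1) / n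
        - 2 * s * n * q ^ 2 - 2 * r * q ^ 3) * Polynomial.X
    + Polynomial.C ((s : ℚ) ^ 2 * q * ((r : ℚ) ^ 2 * q ^ 2 + 1) / n - 2 * q ^ 2 * s * r + n * q)).natDegree = 4 := by
      compute_degree!
    rw [Polynomial.leadingCoeff, hdeg]
    simp only [Polynomial.coeff_add, Polynomial.coeff_C_mul, Polynomial.coeff_X_pow,
      Polynomial.coeff_X, Polynomial.coeff_C]
    norm_num
  · intro r₁
    have ht : ((((r₁ : ℚ) * n + r) ^ 2 * q ^ 2 + 1) / n) ≠ 0 := by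
      have h1 : (0:ℚ) < ((r₁ : ℚ) * n + r) ^ 2 * q ^ 2 + 1 := by positivity
      have h2 : (0:ℚ) < (n:ℚ) := lt_of_le_of_ne (by positivity) (Ne.symm hn0)
      positivity
    dsimp only
    simp only [Polynomial.eval_add, Polynomial.eval_mul, Polynomial.eval_C, Polynomial.eval_pow,
      Polynomial.eval_X]
    field_simp
    ring
end

section
/- For every rational value k/q (q ∈ ℕ, q ≥ 2, k ∈ ℤ, gcd(k,q)=1) that is attained by some normalized Dedekind sum S(a,b), there exist infinitely many natural numbers b' such that S(a',b') = k/q for some integer a' coprime to b'. -/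
open Finset

lemma saw_int (n : ℤ) : saw (n : ℚ) = 0 := by
  unfold saw
  simp [Rat.den_intCast]

lemma saw_eq_zero_of_dvd {z : ℤ} {m : ℕ} (hm : 0 < m) (h : (m:ℤ) ∣ z) :
    saw ((z:ℚ)/(m:ℚ)) = 0 := by
  obtain ⟨t, rfl⟩ := h
  have hm' : (m:ℚ) ≠ 0 := by positivity
  rw [show ((((m:ℤ) * t : ℤ)):ℚ) / (m:ℚ) = ((t:ℤ):ℚ) by push_cast; field_simp]
  exact saw_int t

lemma saw_eq {z : ℤ} {m : ℕ} (hm : 0 < m) (h : ¬ (m:ℤ) ∣ z) :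
    saw ((z:ℚ)/(m:ℚ)) = ((z % m : ℤ) : ℚ)/(m:ℚ) - 1/2 := by
  have hm' : (0:ℚ) < (m:ℚ) := by positivity
  have hden : ((z:ℚ)/(m:ℚ)).den ≠ 1 := by
    intro hd
    have h1 := (Rat.den_eq_one_iff _).mp hd
    set q := (z:ℚ)/(m:ℚ)
    have : (q.num : ℚ) * (m:ℚ) = (z:ℚ) := by
      rw [h1]; exact div_mul_cancel₀ _ (ne_of_gt hm')
    have : q.num * (m:ℤ) = z := by exact_mod_cast this
    exact h ⟨q.num, by linarith [this]⟩
  have hfloor : ⌊(z:ℚ)/(m:ℚ)⌋ = z / (m:ℤ) := by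
    exact Rat.floor_intCast_div_natCast z m
  unfold saw
  rw [if_neg hden, hfloor]
  have : (z % m : ℤ) = z - (m:ℤ) * (z / (m:ℤ)) := Int.emod_def z m
  push_cast [this]
  field_simp

/-- quadratic sum -/
def Qq (a : ℤ) (m : ℕ) : ℚ := ∑ k ∈ Finset.range m, (k:ℚ) * (((a * k % m : ℤ)):ℚ)

lemma gauss_sum (m : ℕ) : ∑ k ∈ Finset.range m, (k:ℚ) = m * (m-1) / 2 := by
  induction m with
  | zero => simp
  | succ n ih => rw [Finset.sum_range_succ, ih]; push_cast; ring

/-- affine reindexing of sums modulo m -/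
lemma affine_sum {m : ℕ} (hm : 0 < m) (α β : ℤ) (hα : IsCoprime α (m:ℤ)) (g : ℤ → ℚ) :
    ∑ k ∈ Finset.range m, g ((α * k + β) % (m:ℤ)) = ∑ k ∈ Finset.range m, g (k : ℤ) := by
  have : NeZero m := ⟨hm.ne'⟩
  obtain ⟨u, v, huv⟩ := hα
  -- the affine map on ZMod m
  have hunit : (u : ZMod m) * (α : ZMod m) = 1 := by
    have := congrArg (fun z : ℤ => (z : ZMod m)) huv
    push_cast at this
    simpa using this
  -- sum over range m of h ∘ val ∘ cast
  have key : ∀ (F : ZMod m → ℚ), ∑ k ∈ Finset.range m, F (k : ZMod m) = ∑ x : ZMod m, F x := by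
    intro F
    apply Finset.sum_nbij' (fun k => ((k:ℕ) : ZMod m)) (fun x => x.val)
    · intro x _; exact Finset.mem_univ _
    · intro x _; exact Finset.mem_range.mpr (ZMod.val_lt x)
    · intro k hk; simp [ZMod.val_natCast_of_lt (Finset.mem_range.mp hk)]
    · intro x _; simp [ZMod.natCast_val, ZMod.cast_id]
    · intro k _; rfl
  have hrw : ∀ k : ℕ, g ((α * k + β) % (m:ℤ)) = g (((α * (k:ℤ) + β : ℤ) : ZMod m).val) := by
    intro k; rw [ZMod.val_intCast]
  calc ∑ k ∈ Finset.range m, g ((α * k + β) % (m:ℤ))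
      = ∑ k ∈ Finset.range m, (fun x : ZMod m => g ((α.cast * x + β.cast : ZMod m).val)) (k : ZMod m) := by
        apply Finset.sum_congr rfl
        intro k _
        rw [hrw k]
        congr 1
        push_cast
        ring_nf
    _ = ∑ x : ZMod m, g ((α.cast * x + β.cast : ZMod m).val) := key (fun x : ZMod m => g ((α.cast * x + β.cast : ZMod m).val))
    _ = ∑ x : ZMod m, g x.val := by
        apply Fintype.sum_bijective (fun x : ZMod m => α.cast * x + β.cast)
        · apply Function.bijective_iff_has_inverse.mpr
          refine ⟨fun y => u.cast * (y - β.cast), ?_, ?_⟩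
          · intro x
            calc (u:ZMod m) * (α.cast * x + β.cast - β.cast) = ((u:ZMod m) * α.cast) * x := by ring
              _ = x := by rw [hunit]; ring
          · intro y
            calc (α:ZMod m) * ((u:ZMod m) * (y - β.cast)) + β.cast
                = ((u:ZMod m) * α.cast) * (y - β.cast) + β.cast := by ring
              _ = y := by rw [hunit]; ring
        · intro x
          rfl
    _ = ∑ k ∈ Finset.range m, g ((k : ZMod m).val) := (key _).symm
    _ = ∑ k ∈ Finset.range m, g (k:ℤ) := by
        apply Finset.sum_congr rfl
        intro k hk
        rw [ZMod.val_natCast_of_lt (Finset.mem_range.mp hk)]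

lemma sum_emod_eq_gauss {m : ℕ} (hm : 0 < m) (α β : ℤ) (hα : IsCoprime α (m:ℤ)) :
    ∑ k ∈ Finset.range m, (((α * k + β) % (m:ℤ) : ℤ):ℚ) = m * (m-1)/2 := by
  rw [affine_sum hm α β hα (fun z => (z:ℚ))]
  have := gauss_sum m
  rw [← this]
  apply Finset.sum_congr rfl
  intro k _
  push_cast
  ring

lemma dedS_eq {a : ℤ} {m : ℕ} (hm : 0 < m) (h : IsCoprime a (m:ℤ)) :
    dedS a m = Qq a m / (m:ℚ)^2 - ((m:ℚ)-1)/4 := by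
  have hm' : (0:ℚ) < (m:ℚ) := by positivity
  set F : ℕ → ℚ := fun k => saw ((k : ℚ) / m) * saw ((a : ℚ) * k / m) with hF
  have hcast : ∀ k : ℕ, (a:ℚ) * k / m = (((a * k : ℤ)):ℚ)/(m:ℚ) := by
    intro k; push_cast; ring
  -- rewrite index set
  have h0 : dedS a m = ∑ k ∈ Finset.range m, F k := by
    unfold dedS
    rw [← Finset.Ico_add_one_right_eq_Icc, Finset.sum_Ico_succ_top (by omega), Finset.range_eq_Ico,
       Finset.sum_eq_sum_Ico_succ_bot hm]
    have hFm : F m = 0 := by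
      have : ((m:ℚ))/(m:ℚ) = ((1:ℤ):ℚ) := by field_simp; norm_num
      simp only [hF, this, saw_int, zero_mul]
    have hF0 : F 0 = 0 := by
      have : ((0:ℕ):ℚ)/(m:ℚ) = ((0:ℤ):ℚ) := by norm_num
      simp only [hF, this, saw_int, zero_mul]
    rw [show (0+1) = 1 from rfl]
    have : saw ((m:ℚ) / m) * saw ((a:ℚ) * m / m) = F m := rfl
    rw [this, hFm, hF0]
    simp only [add_zero, zero_add]
    rfl
  -- term formula
  have hterm : ∀ k ∈ Finset.range m,
      F k = ((k:ℚ)/m - 1/2) * ((((a*k % m : ℤ)):ℚ)/m - 1/2) - (if k = 0 then 1/4 else 0) := by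
    intro k hk
    have hklt := Finset.mem_range.mp hk
    by_cases hk0 : k = 0
    · subst hk0
      have hF0 : F 0 = 0 := by
        have : ((0:ℕ):ℚ)/(m:ℚ) = ((0:ℤ):ℚ) := by norm_num
        simp only [hF, this, saw_int, zero_mul]
      rw [hF0]
      norm_num
    · have hndvd : ¬ ((m:ℤ) ∣ (k:ℤ)) := by
        intro hdvd
        rcases Int.le_of_dvd (by exact_mod_cast Nat.pos_of_ne_zero hk0) hdvd with hle
        omega
      have hndvd2 : ¬ ((m:ℤ) ∣ a * k) := by
        intro hdvd
        exact hndvd ((h.symm).dvd_of_dvd_mul_left hdvd)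
      have e1 : saw ((k:ℚ)/m) = (((k:ℤ) % m : ℤ):ℚ)/m - 1/2 := by
        have : ((k:ℕ):ℚ) = (((k:ℕ):ℤ):ℚ) := by push_cast; ring
        rw [this]; exact saw_eq hm hndvd
      have e2 : saw ((a:ℚ) * k / m) = (((a*k) % m : ℤ):ℚ)/m - 1/2 := by
        rw [hcast k]; exact saw_eq hm hndvd2
      have hkmod : ((k:ℤ) % m : ℤ) = (k:ℤ) := Int.emod_eq_of_lt (by positivity) (by exact_mod_cast hklt)
      rw [hF]
      simp only []
      rw [e1, e2, hkmod, if_neg hk0]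
      push_cast
      ring
  rw [h0, Finset.sum_congr rfl hterm]
  rw [Finset.sum_sub_distrib]
  have hite : ∑ k ∈ Finset.range m, (if k = 0 then (1:ℚ)/4 else 0) = 1/4 := by
    rw [Finset.sum_ite_eq' (Finset.range m) 0 (fun _ => (1:ℚ)/4)]
    simp [Finset.mem_range, hm]
  rw [hite]
  have hexp : ∀ k ∈ Finset.range m,
      ((k:ℚ)/m - 1/2) * ((((a*k % m : ℤ)):ℚ)/m - 1/2)
      = ((k:ℚ) * (((a*k % m : ℤ)):ℚ))/(m:ℚ)^2 - (k:ℚ)/(2*m) - (((a*k % m : ℤ)):ℚ)/(2*m) + 1/4 := by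
    intro k _
    field_simp
    ring
  rw [Finset.sum_congr rfl hexp]
  have hsplit : ∑ k ∈ Finset.range m,
      (((k:ℚ) * (((a*k % m : ℤ)):ℚ))/(m:ℚ)^2 - (k:ℚ)/(2*m) - (((a*k % m : ℤ)):ℚ)/(2*m) + 1/4)
      = (∑ k ∈ Finset.range m, ((k:ℚ) * (((a*k % m : ℤ)):ℚ)))/(m:ℚ)^2
        - (∑ k ∈ Finset.range m, (k:ℚ))/(2*m)
        - (∑ k ∈ Finset.range m, (((a*k % m : ℤ)):ℚ))/(2*m)
        + m/4 := by
    rw [Finset.sum_add_distrib, Finset.sum_sub_distrib, Finset.sum_sub_distrib,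
       ← Finset.sum_div, ← Finset.sum_div, ← Finset.sum_div]
    simp [Finset.sum_const, Finset.card_range]
    ring
  rw [hsplit, gauss_sum]
  have hmod : ∑ k ∈ Finset.range m, (((a*k % m : ℤ)):ℚ) = m * (m-1)/2 := by
    have := sum_emod_eq_gauss hm a 0 h
    simp only [add_zero] at this
    exact this
  rw [hmod]
  unfold Qq
  field_simp
  ring

lemma isCoprime_b_c (B : ℤ) : IsCoprime B (B^2+1) := by
  have h : IsCoprime B 1 := isCoprime_one_right
  have := h.add_mul_left_right B
  rwa [show 1 + B*B = B^2+1 by ring] at this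

lemma Qq_bc (b : ℕ) (hb : 0 < b) :
    Qq (b:ℤ) (b^2+1) = ((b^2+1:ℕ):ℚ)^2 * (((b^2+1:ℕ):ℚ)-1)/4 := by
  set c : ℕ := b^2+1 with hc
  have hc0 : 0 < c := by positivity
  have hcZ : ((c:ℕ):ℤ) = (b:ℤ)^2+1 := by push_cast [hc]; ring
  have hcop : IsCoprime (b:ℤ) ((c:ℕ):ℤ) := by rw [hcZ]; exact isCoprime_b_c (b:ℤ)
  have h1 := affine_sum hc0 (b:ℤ) 0 hcop (fun z => (z:ℚ) * ((((b:ℤ) * z % (c:ℤ) : ℤ)):ℚ))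
  have hRHS : ∑ k ∈ Finset.range c, (fun z : ℤ => (z:ℚ) * ((((b:ℤ) * z % (c:ℤ) : ℤ)):ℚ)) (k:ℤ) = Qq (b:ℤ) c := rfl
  rw [hRHS] at h1
  -- transform LHS of h1
  have hL : ∑ k ∈ Finset.range c, (fun z : ℤ => (z:ℚ) * ((((b:ℤ) * z % (c:ℤ) : ℤ)):ℚ)) (((b:ℤ) * k + 0) % (c:ℤ))
      = ∑ v ∈ Finset.range c, ((((b:ℤ)*v % c : ℤ)):ℚ) * ((c:ℚ) - (v:ℚ)) := by
    apply Finset.sum_congr rfl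
    intro v hv
    have hvlt := Finset.mem_range.mp hv
    simp only [add_zero]
    by_cases hv0 : v = 0
    · subst hv0; simp
    · have hv1 : (1:ℤ) ≤ (v:ℤ) := by exact_mod_cast Nat.one_le_iff_ne_zero.mpr hv0
      have hinner : ((b:ℤ) * ((b:ℤ)*v % c)) % (c:ℤ) = ((c:ℤ) - v) := by
        have e1 : ((b:ℤ) * ((b:ℤ)*v % c)) % (c:ℤ) = ((b:ℤ) * ((b:ℤ)*v)) % (c:ℤ) := by
          rw [Int.mul_emod ((b:ℤ)) ((b:ℤ)*v % c), Int.emod_emod_of_dvd _ dvd_rfl, ← Int.mul_emod]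
        rw [e1]
        have e2 : (b:ℤ) * ((b:ℤ)*(v:ℤ)) = (-(v:ℤ)) + ((c:ℤ))*((v:ℤ)) := by rw [hcZ]; ring
        rw [e2, Int.add_mul_emod_self_left]
        have e3 : (-(v:ℤ)) % (c:ℤ) = ((c:ℤ) - v) % (c:ℤ) := by
          conv_rhs => rw [show ((c:ℤ) - v) = -(v:ℤ) + (c:ℤ)*1 by ring]
          rw [Int.add_mul_emod_self_left]
        rw [e3]
        apply Int.emod_eq_of_lt (by omega)
        have : (0:ℤ) < (c:ℤ) := by exact_mod_cast hc0
        omega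
      rw [hinner]
      push_cast
      ring
  rw [hL] at h1
  -- now h1 : Σ (bv%c)(c-v) = Qq b c
  have hsplit : ∑ v ∈ Finset.range c, ((((b:ℤ)*v % c : ℤ)):ℚ) * ((c:ℚ) - (v:ℚ))
      = (c:ℚ) * (∑ v ∈ Finset.range c, ((((b:ℤ)*v % c : ℤ)):ℚ)) - Qq (b:ℤ) c := by
    unfold Qq
    rw [Finset.mul_sum, ← Finset.sum_sub_distrib]
    apply Finset.sum_congr rfl
    intro v _
    ring
  rw [hsplit] at h1
  have hg : ∑ v ∈ Finset.range c, ((((b:ℤ)*v % c : ℤ)):ℚ) = c*((c:ℚ)-1)/2 := by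
    have := sum_emod_eq_gauss hc0 (b:ℤ) 0 hcop
    simp only [add_zero] at this
    exact this
  rw [hg] at h1
  have : (2:ℚ) * Qq (b:ℤ) c = (c:ℚ) * ((c:ℚ)*((c:ℚ)-1)/2) := by linarith
  linarith

lemma key_mod {a B v w : ℤ} (hB : 0 < B) (hv : 0 ≤ v) (hv2 : v < B^2+1) (hw : 0 ≤ w) (hw2 : w < B) :
    ((a*(B^2+1)+B) * (v + (B^2+1)*w)) % (B*(B^2+1))
    = (B*v % (B^2+1)) + (B^2+1) * ((a*(v+w) + (B*v)/(B^2+1)) % B) := by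
  set Y : ℤ := a*(v+w) + (B*v)/(B^2+1) with hY
  set r : ℤ := (B*v % (B^2+1)) + (B^2+1) * (Y % B) with hr
  have hC0 : (0:ℤ) < B^2+1 := by positivity
  have h1 : 0 ≤ B*v % (B^2+1) := Int.emod_nonneg _ (by positivity)
  have h2 : B*v % (B^2+1) < B^2+1 := Int.emod_lt_of_pos _ hC0
  have h3 : 0 ≤ Y % B := Int.emod_nonneg _ (by omega)
  have h4 : Y % B < B := Int.emod_lt_of_pos _ hB
  have hrange : 0 ≤ r ∧ r < B*(B^2+1) := by
    constructor
    · positivity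
    · nlinarith
  have hexp : (a*(B^2+1)+B) * (v + (B^2+1)*w)
      = r + (B*(B^2+1)) * (a*w*B + w + Y/B) := by
    rw [hr]
    rw [Int.emod_def (B*v) (B^2+1), Int.emod_def Y B]
    rw [hY]
    ring
  rw [hexp, Int.add_mul_emod_self_left]
  exact Int.emod_eq_of_lt hrange.1 hrange.2

lemma f_val {B i j : ℤ} (hB : 0 < B) (hi : 0 ≤ i) (hi2 : i < B) (hj : 0 ≤ j) (hj2 : j < B) :
    (B*(i + B*j + 1))/(B^2+1) = j := by
  have h1 : B*(i + B*j + 1) = (B + i*B - j) + (B^2+1)*j := by ring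
  rw [h1, Int.add_mul_ediv_left _ j (by positivity)]
  rw [Int.ediv_eq_zero_of_lt (by nlinarith) (by nlinarith)]
  ring

lemma sum_range_mul (c b : ℕ) (hc : 0 < c) (F : ℕ → ℚ) :
    ∑ k ∈ Finset.range (c*b), F k = ∑ v ∈ Finset.range c, ∑ w ∈ Finset.range b, F (v + c*w) := by
  rw [← Finset.sum_product']
  apply Finset.sum_nbij' (fun k => (k % c, k / c)) (fun p => p.1 + c * p.2)
  · intro k hk
    have hk' := Finset.mem_range.mp hk
    refine Finset.mem_product.mpr ⟨Finset.mem_range.mpr (Nat.mod_lt _ hc), Finset.mem_range.mpr ?_⟩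
    rw [Nat.div_lt_iff_lt_mul hc]
    rw [Nat.mul_comm c b] at hk'
    omega
  · intro p hp
    obtain ⟨h1, h2⟩ := Finset.mem_product.mp hp
    have h1' := Finset.mem_range.mp h1
    have h2' := Finset.mem_range.mp h2
    refine Finset.mem_range.mpr ?_
    calc p.1 + c*p.2 < c + c*p.2 := by omega
      _ = c*(p.2+1) := by ring
      _ ≤ c*b := Nat.mul_le_mul_left c (by omega)
  · intro k _; exact Nat.mod_add_div k c
  · intro p hp
    obtain ⟨h1, h2⟩ := Finset.mem_product.mp hp
    have h1' := Finset.mem_range.mp h1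
    ext
    · simp [Nat.add_mul_mod_self_left, Nat.mod_eq_of_lt h1']
    · simp [Nat.add_mul_div_left _ _ hc, Nat.div_eq_of_lt h1']
  · intro k _
    rw [Nat.mod_add_div k c]

lemma dedS_step (a : ℤ) (b : ℕ) (hb : 0 < b) (hab : IsCoprime a (b:ℤ)) :
    dedS (a*((b:ℤ)^2+1)+(b:ℤ)) (b*(b^2+1)) = dedS a b := by
  set c : ℕ := b^2+1 with hcdef
  have hc0 : 0 < c := by positivity
  have hcZ : ((c:ℕ):ℤ) = (b:ℤ)^2+1 := by rw [hcdef]; push_cast; ring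
  have hcQ : ((c:ℕ):ℚ) = (b:ℚ)^2+1 := by rw [hcdef]; push_cast; ring
  have hbZ : (0:ℤ) < (b:ℤ) := by exact_mod_cast hb
  set a' : ℤ := a*((b:ℤ)^2+1)+(b:ℤ) with ha'
  have hcopBC : IsCoprime ((b:ℤ)) ((c:ℕ):ℤ) := by rw [hcZ]; exact isCoprime_b_c (b:ℤ)
  have hab' : IsCoprime a' ((b:ℤ)) := by
    have := hab.add_mul_right_left (a*(b:ℤ)+1)
    rwa [show a + (a*(b:ℤ)+1)*(b:ℤ) = a' by rw [ha']; ring] at this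
  have hac' : IsCoprime a' (((c:ℕ)):ℤ) := by
    have := (isCoprime_b_c (b:ℤ)).add_mul_left_left a
    rw [show (b:ℤ) + ((b:ℤ)^2+1)*a = a' by rw [ha']; ring] at this
    rwa [hcZ]
  have haN : IsCoprime a' (((b*c:ℕ)):ℤ) := by
    push_cast
    exact hab'.mul_right hac'
  have hNpos : 0 < b*c := Nat.mul_pos hb hc0
  -- the w'-function and R
  set R : ℤ → ℚ := fun h => ∑ w ∈ Finset.range b, (w:ℚ) * (((a*w + h) % (b:ℤ) : ℤ):ℚ) with hR
  have Rmod : ∀ x : ℤ, R x = R (x % (b:ℤ)) := by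
    intro x
    apply Finset.sum_congr rfl
    intro w _
    congr 2
    rw [Int.add_emod (a*w) x, Int.add_emod (a*w) (x % (b:ℤ)), Int.emod_emod_of_dvd _ dvd_rfl]
  have hGb : ∑ w ∈ Finset.range b, (w:ℚ) = (b:ℚ)*((b:ℚ)-1)/2 := gauss_sum b
  -- counting lemma
  have count : ∑ v ∈ Finset.range c, R (a*v + ((b:ℤ)*v)/((b:ℤ)^2+1))
      = Qq a b + (b:ℚ) * ((b:ℚ)*((b:ℚ)-1)/2)^2 := by
    have hc' : c = b*b+1 := by rw [hcdef]; ring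
    rw [hc', Finset.sum_range_succ' (fun v => R (a*v + ((b:ℤ)*v)/((b:ℤ)^2+1))) (b*b)]
    have hH0 : R (a*(0:ℕ) + ((b:ℤ)*(0:ℕ))/((b:ℤ)^2+1)) = Qq a b := by
      norm_num
      apply Finset.sum_congr rfl
      intro w _
      norm_num
    rw [hH0]
    have hprod := sum_range_mul b b hb (fun i => R (a*(i+1:ℕ) + ((b:ℤ)*(i+1:ℕ))/((b:ℤ)^2+1)))
    rw [hprod]
    have hinner : ∀ i₀ ∈ Finset.range b, ∀ j ∈ Finset.range b,
        R (a*((i₀ + b*j)+1:ℕ) + ((b:ℤ)*((i₀ + b*j)+1:ℕ))/((b:ℤ)^2+1))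
        = R (((a*(b:ℤ)+1)*j + a*((i₀:ℤ)+1)) % (b:ℤ)) := by
      intro i₀ hi₀ j hj
      have hi' := Finset.mem_range.mp hi₀
      have hj' := Finset.mem_range.mp hj
      have hfv : ((b:ℤ)*((i₀ + b*j)+1:ℕ))/((b:ℤ)^2+1) = (j:ℤ) := by
        have : (((i₀ + b*j)+1:ℕ):ℤ) = (i₀:ℤ) + (b:ℤ)*(j:ℤ) + 1 := by push_cast; ring
        rw [this]
        exact f_val hbZ (by positivity) (by exact_mod_cast hi') (by positivity) (by exact_mod_cast hj')
      rw [hfv, ← Rmod]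
      congr 1
      push_cast
      ring
    have hcop1 : IsCoprime (a*(b:ℤ)+1) ((b:ℤ)) := by
      have := (isCoprime_one_left : IsCoprime 1 ((b:ℤ))).add_mul_right_left a
      rwa [show (1 + a*(b:ℤ)) = a*(b:ℤ)+1 by ring] at this
    have hsum2 : ∀ i₀ ∈ Finset.range b,
        ∑ j ∈ Finset.range b, R (a*((i₀ + b*j)+1:ℕ) + ((b:ℤ)*((i₀ + b*j)+1:ℕ))/((b:ℤ)^2+1))
        = ∑ j ∈ Finset.range b, R (j:ℤ) := by
      intro i₀ hi₀
      rw [Finset.sum_congr rfl (hinner i₀ hi₀)]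
      exact affine_sum hb (a*(b:ℤ)+1) (a*((i₀:ℤ)+1)) hcop1 R
    rw [Finset.sum_congr rfl hsum2, Finset.sum_const, Finset.card_range]
    have hRj : ∑ j ∈ Finset.range b, R (j:ℤ) = ((b:ℚ)*((b:ℚ)-1)/2)^2 := by
      rw [hR]
      simp only []
      rw [Finset.sum_comm]
      have hper : ∀ w ∈ Finset.range b,
          ∑ j ∈ Finset.range b, (w:ℚ) * (((a*w + (j:ℤ)) % (b:ℤ) : ℤ):ℚ)
          = (w:ℚ) * ((b:ℚ)*((b:ℚ)-1)/2) := by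
        intro w _
        rw [← Finset.mul_sum]
        congr 1
        have harg : ∀ j ∈ Finset.range b,
            (((a*w + (j:ℤ)) % (b:ℤ) : ℤ):ℚ) = (((1*(j:ℤ) + a*w) % (b:ℤ) : ℤ):ℚ) := by
          intro j _; congr 2; ring
        rw [Finset.sum_congr rfl harg,
           affine_sum hb 1 (a*(w:ℤ)) isCoprime_one_left (fun z => (z:ℚ))]
        exact gauss_sum b
      rw [Finset.sum_congr rfl hper, ← Finset.sum_mul, hGb]
      ring
    rw [hRj]
    rw [nsmul_eq_mul]
    ring
  -- gauss-type sums over range c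
  have hVsum : ∑ v ∈ Finset.range c, ((((b:ℤ)*v % ((b:ℤ)^2+1) : ℤ)):ℚ) = (c:ℚ)*((c:ℚ)-1)/2 := by
    have h := sum_emod_eq_gauss hc0 (b:ℤ) 0 hcopBC
    simp only [add_zero] at h
    rw [hcZ] at h
    exact h
  have hQbc : ∑ v ∈ Finset.range c, (v:ℚ) * ((((b:ℤ)*v % ((b:ℤ)^2+1) : ℤ)):ℚ)
      = (c:ℚ)^2*((c:ℚ)-1)/4 := by
    have h := Qq_bc b hb
    rw [← hcdef] at h
    unfold Qq at h
    rw [hcZ] at h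
    exact h
  have hvgauss : ∑ v ∈ Finset.range c, (v:ℚ) = (c:ℚ)*((c:ℚ)-1)/2 := gauss_sum c
  -- main expansion
  have hQmain : Qq a' (b*c)
      = (b:ℚ)*((c:ℚ)^2*((c:ℚ)-1)/4)
        + ((c:ℚ)*((b:ℚ)*((b:ℚ)-1)/2))*((c:ℚ)*((c:ℚ)-1)/2)
        + ((c:ℚ)*((b:ℚ)*((b:ℚ)-1)/2))*((c:ℚ)*((c:ℚ)-1)/2)
        + (c:ℚ)^2*(Qq a b + (b:ℚ) * ((b:ℚ)*((b:ℚ)-1)/2)^2) := by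
    unfold Qq
    rw [show b*c = c*b from Nat.mul_comm b c]
    rw [sum_range_mul c b hc0 (fun k => (k:ℚ)*(((a'*k % ((c*b:ℕ):ℤ) : ℤ)):ℚ))]
    have e0 : ((c*b:ℕ):ℤ) = (b:ℤ)*((b:ℤ)^2+1) := by rw [hcdef]; push_cast; ring
    have hterm : ∀ v ∈ Finset.range c, ∀ w ∈ Finset.range b,
        (((v + c*w : ℕ)):ℚ)*(((a'*((v + c*w : ℕ)) % ((c*b:ℕ):ℤ) : ℤ)):ℚ)
        = (v:ℚ)*((((b:ℤ)*v % ((b:ℤ)^2+1) : ℤ)):ℚ)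
          + ((c:ℚ)*(v:ℚ))*((((a*((v:ℤ)+(w:ℤ)) + ((b:ℤ)*v)/((b:ℤ)^2+1)) % (b:ℤ) : ℤ)):ℚ)
          + ((c:ℚ)*((((b:ℤ)*v % ((b:ℤ)^2+1) : ℤ)):ℚ))*(w:ℚ)
          + ((c:ℚ)^2*(w:ℚ))*((((a*((v:ℤ)+(w:ℤ)) + ((b:ℤ)*v)/((b:ℤ)^2+1)) % (b:ℤ) : ℤ)):ℚ) := by
      intro v hv w hw
      have hv' := Finset.mem_range.mp hv
      have hw' := Finset.mem_range.mp hw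
      have e1 : ((v + c*w : ℕ):ℤ) = (v:ℤ) + ((b:ℤ)^2+1)*(w:ℤ) := by rw [hcdef]; push_cast; ring
      have hkm := key_mod (a := a) (B := (b:ℤ)) (v := (v:ℤ)) (w := (w:ℤ)) hbZ
        (by positivity) (by rw [← hcZ]; exact_mod_cast hv') (by positivity) (by exact_mod_cast hw')
      have e2 : a'*((v + c*w : ℕ):ℤ) % ((c*b:ℕ):ℤ)
          = ((b:ℤ)*v % ((b:ℤ)^2+1)) + ((b:ℤ)^2+1) * ((a*((v:ℤ)+(w:ℤ)) + ((b:ℤ)*v)/((b:ℤ)^2+1)) % (b:ℤ)) := by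
        rw [e0, e1, ha']
        exact hkm
      rw [e2]
      have e3 : ((v + c*w : ℕ):ℚ) = (v:ℚ) + (c:ℚ)*(w:ℚ) := by push_cast; ring
      rw [e3]
      push_cast [hcQ]
      ring
    rw [Finset.sum_congr rfl (fun v hv => Finset.sum_congr rfl (hterm v hv))]
    -- inner sums
    have hWsum : ∀ v ∈ Finset.range c,
        ∑ w ∈ Finset.range b, ((((a*((v:ℤ)+(w:ℤ)) + ((b:ℤ)*v)/((b:ℤ)^2+1)) % (b:ℤ) : ℤ)):ℚ)
        = (b:ℚ)*((b:ℚ)-1)/2 := by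
      intro v _
      have harg : ∀ w ∈ Finset.range b,
          ((((a*((v:ℤ)+(w:ℤ)) + ((b:ℤ)*v)/((b:ℤ)^2+1)) % (b:ℤ) : ℤ)):ℚ)
          = ((((a*(w:ℤ) + (a*(v:ℤ) + ((b:ℤ)*v)/((b:ℤ)^2+1))) % (b:ℤ) : ℤ)):ℚ) := by
        intro w _; congr 2; ring
      rw [Finset.sum_congr rfl harg,
         affine_sum hb a (a*(v:ℤ) + ((b:ℤ)*v)/((b:ℤ)^2+1)) hab (fun z => (z:ℚ))]
      exact gauss_sum b
    have hRsum : ∀ v ∈ Finset.range c,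
        ∑ w ∈ Finset.range b, (w:ℚ) * ((((a*((v:ℤ)+(w:ℤ)) + ((b:ℤ)*v)/((b:ℤ)^2+1)) % (b:ℤ) : ℤ)):ℚ)
        = R (a*(v:ℤ) + ((b:ℤ)*v)/((b:ℤ)^2+1)) := by
      intro v _
      rw [hR]
      apply Finset.sum_congr rfl
      intro w _
      congr 3
      ring
    have hinnerv : ∀ v ∈ Finset.range c,
        ∑ w ∈ Finset.range b,
          ((v:ℚ)*((((b:ℤ)*v % ((b:ℤ)^2+1) : ℤ)):ℚ)
          + ((c:ℚ)*(v:ℚ))*((((a*((v:ℤ)+(w:ℤ)) + ((b:ℤ)*v)/((b:ℤ)^2+1)) % (b:ℤ) : ℤ)):ℚ)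
          + ((c:ℚ)*((((b:ℤ)*v % ((b:ℤ)^2+1) : ℤ)):ℚ))*(w:ℚ)
          + ((c:ℚ)^2*(w:ℚ))*((((a*((v:ℤ)+(w:ℤ)) + ((b:ℤ)*v)/((b:ℤ)^2+1)) % (b:ℤ) : ℤ)):ℚ))
        = (b:ℚ)*((v:ℚ)*((((b:ℤ)*v % ((b:ℤ)^2+1) : ℤ)):ℚ))
          + ((c:ℚ)*(v:ℚ))*((b:ℚ)*((b:ℚ)-1)/2)
          + ((c:ℚ)*((((b:ℤ)*v % ((b:ℤ)^2+1) : ℤ)):ℚ))*((b:ℚ)*((b:ℚ)-1)/2)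
          + (c:ℚ)^2 * R (a*(v:ℤ) + ((b:ℤ)*v)/((b:ℤ)^2+1)) := by
      intro v hv
      rw [Finset.sum_add_distrib, Finset.sum_add_distrib, Finset.sum_add_distrib]
      rw [Finset.sum_const, Finset.card_range, nsmul_eq_mul]
      rw [← Finset.mul_sum, ← Finset.mul_sum]
      rw [hWsum v hv, hGb]
      have h4 : ∑ w ∈ Finset.range b, (c:ℚ)^2*(w:ℚ)*((((a*((v:ℤ)+(w:ℤ)) + ((b:ℤ)*v)/((b:ℤ)^2+1)) % (b:ℤ) : ℤ)):ℚ)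
          = (c:ℚ)^2 * ∑ w ∈ Finset.range b, (w:ℚ)*((((a*((v:ℤ)+(w:ℤ)) + ((b:ℤ)*v)/((b:ℤ)^2+1)) % (b:ℤ) : ℤ)):ℚ) := by
        rw [Finset.mul_sum]
        apply Finset.sum_congr rfl
        intro w _
        ring
      rw [h4, hRsum v hv]
    rw [Finset.sum_congr rfl hinnerv]
    rw [Finset.sum_add_distrib, Finset.sum_add_distrib, Finset.sum_add_distrib]
    rw [← Finset.mul_sum, ← Finset.mul_sum]
    rw [hQbc, count]
    have hmid1 : ∑ v ∈ Finset.range c, ((c:ℚ)*(v:ℚ))*((b:ℚ)*((b:ℚ)-1)/2)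
        = ((c:ℚ)*((b:ℚ)*((b:ℚ)-1)/2))*((c:ℚ)*((c:ℚ)-1)/2) := by
      rw [show (fun v : ℕ => ((c:ℚ)*(v:ℚ))*((b:ℚ)*((b:ℚ)-1)/2)) = (fun v : ℕ => ((c:ℚ)*((b:ℚ)*((b:ℚ)-1)/2))*(v:ℚ)) from funext (fun v => by ring)]
      rw [← Finset.mul_sum, hvgauss]
    have hmid2 : ∑ v ∈ Finset.range c, ((c:ℚ)*((((b:ℤ)*v % ((b:ℤ)^2+1) : ℤ)):ℚ))*((b:ℚ)*((b:ℚ)-1)/2)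
        = ((c:ℚ)*((b:ℚ)*((b:ℚ)-1)/2))*((c:ℚ)*((c:ℚ)-1)/2) := by
      rw [show (fun v : ℕ => ((c:ℚ)*((((b:ℤ)*v % ((b:ℤ)^2+1) : ℤ)):ℚ))*((b:ℚ)*((b:ℚ)-1)/2))
          = (fun v : ℕ => ((c:ℚ)*((b:ℚ)*((b:ℚ)-1)/2))*((((b:ℤ)*v % ((b:ℤ)^2+1) : ℤ)):ℚ)) from funext (fun v => by ring)]
      rw [← Finset.mul_sum, hVsum]
    rw [hmid1, hmid2]
    unfold Qq
    try rfl
    try ring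
  -- final assembly
  rw [dedS_eq hNpos haN, dedS_eq hb hab, hQmain]
  have hbcQ : ((b*c : ℕ):ℚ) = (b:ℚ)*(c:ℚ) := by push_cast; ring
  rw [hbcQ, hcQ]
  have hbQ : (0:ℚ) < (b:ℚ) := by exact_mod_cast hb
  have h1 : (b:ℚ) ≠ 0 := ne_of_gt hbQ
  have h2 : (b:ℚ)^2+1 ≠ 0 := by positivity
  field_simp
  ring

lemma coprime_step (a : ℤ) (b : ℕ) (hab : IsCoprime a (b:ℤ)) :
    IsCoprime (a*((b:ℤ)^2+1)+(b:ℤ)) (((b*(b^2+1) : ℕ)):ℤ) := by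
  have hab' : IsCoprime (a*((b:ℤ)^2+1)+(b:ℤ)) ((b:ℤ)) := by
    have := hab.add_mul_right_left (a*(b:ℤ)+1)
    rwa [show a + (a*(b:ℤ)+1)*(b:ℤ) = a*((b:ℤ)^2+1)+(b:ℤ) by ring] at this
  have hac' : IsCoprime (a*((b:ℤ)^2+1)+(b:ℤ)) (((b:ℤ)^2+1)) := by
    have := (isCoprime_b_c (b:ℤ)).add_mul_left_left a
    rwa [show (b:ℤ) + ((b:ℤ)^2+1)*a = a*((b:ℤ)^2+1)+(b:ℤ) by ring] at this
  have : ((b*(b^2+1) : ℕ):ℤ) = (b:ℤ) * ((b:ℤ)^2+1) := by push_cast; ring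
  rw [this]
  exact hab'.mul_right hac'

theorem stmt_18 (k : ℤ) (q : ℕ) (hq : 2 ≤ q) (hkq : Int.gcd k q = 1)
    (h : ∃ a : ℤ, ∃ b : ℕ, 0 < b ∧ Int.gcd a b = 1 ∧ S a b = (k : ℚ) / q) :
    {b' : ℕ | ∃ a' : ℤ, Int.gcd a' b' = 1 ∧ S a' b' = (k : ℚ) / q}.Infinite := by
  obtain ⟨a, b, hb, hab, hS⟩ := h
  set step : ℤ × ℕ → ℤ × ℕ := fun p => (p.1 * ((p.2:ℤ)^2+1) + (p.2:ℤ), p.2 * (p.2^2+1)) with hstep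
  set seq : ℕ → ℤ × ℕ := fun n => step^[n] (a, b) with hseq
  have hseq0 : seq 0 = (a, b) := rfl
  have hseq_succ : ∀ n, seq (n+1) = step (seq n) := by
    intro n
    rw [hseq]
    simp only []
    rw [Function.iterate_succ_apply']
  have key : ∀ n, 0 < (seq n).2 ∧ IsCoprime (seq n).1 (((seq n).2:ℕ):ℤ)
      ∧ S (seq n).1 (seq n).2 = (k:ℚ)/q := by
    intro n
    induction n with
    | zero => exact ⟨hb, Int.isCoprime_iff_gcd_eq_one.mpr hab, hS⟩
    | succ n ih =>
      obtain ⟨h1, h2, h3⟩ := ih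
      rw [hseq_succ n, hstep]
      refine ⟨?_, ?_, ?_⟩
      · exact Nat.mul_pos h1 (by positivity)
      · exact coprime_step _ _ h2
      · show S ((seq n).1 * (((seq n).2:ℤ)^2+1) + ((seq n).2:ℤ)) ((seq n).2 * ((seq n).2^2+1)) = (k:ℚ)/q
        unfold S
        rw [dedS_step _ _ h1 h2]
        unfold S at h3
        exact h3
  have mono : StrictMono (fun n => (seq n).2) := by
    apply strictMono_nat_of_lt_succ
    intro n
    have h1 := (key n).1
    rw [hseq_succ n, hstep]
    show (seq n).2 < (seq n).2 * ((seq n).2^2+1)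
    nlinarith [h1]
  apply Set.infinite_of_injective_forall_mem (f := fun n => (seq n).2) mono.injective
  intro n
  obtain ⟨h1, h2, h3⟩ := key n
  exact ⟨(seq n).1, Int.isCoprime_iff_gcd_eq_one.mp h2, h3⟩
end
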